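/- An edge-ordered graph F on f vertices is Turánable if and only if each of the four canonical edge-orderings of K_f (min, max, inverse min, inverse max) contains a copy of F. -/

import Mathlib

/-- An *edge-ordered graph*: a simple graph together with a real labeling of
pairs of vertices that is injective on the edge set (hence inducing a linear
order of the edges). -/
structure EdgeOrderedGraph (V : Type*) where
  graph : SimpleGraph V
  label : Sym2 V → ℝ
  inj : ∀ e₁ ∈ graph.edgeSet, ∀ e₂ ∈ graph.edgeSet, label e₁ = label e₂ → e₁ = e₂

namespace EdgeOrderedGraph

/-- `φ` realizes a copy of the edge-ordered graph `F` inside `G`. -/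
def IsCopy {W V : Type*} (F : EdgeOrderedGraph W) (G : EdgeOrderedGraph V) (φ : W → V) : Prop :=
  Function.Injective φ ∧
    (∀ a b : W, F.graph.Adj a b → G.graph.Adj (φ a) (φ b)) ∧
    (∀ a b c d : W, F.graph.Adj a b → F.graph.Adj c d →
      F.label s(a, b) < F.label s(c, d) → G.label s(φ a, φ b) < G.label s(φ c, φ d))

/-- `G` contains a copy of `F`. -/
def ContainsCopy {W V : Type*} (G : EdgeOrderedGraph V) (F : EdgeOrderedGraph W) : Prop :=
  ∃ φ : W → V, IsCopy F G φ

/-- `G` has a collection of vertex-disjoint copies of `F` covering exactly `S`. -/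
def HasPerfectTilingOn {W V : Type*} (F : EdgeOrderedGraph W) (G : EdgeOrderedGraph V)
    (S : Set V) : Prop :=
  ∃ T : Set (W → V),
    (∀ φ ∈ T, IsCopy F G φ) ∧
    (∀ φ ∈ T, ∀ w : W, φ w ∈ S) ∧
    ∀ v ∈ S, ∃! p : (W → V) × W, p.1 ∈ T ∧ p.1 p.2 = v

/-- `G` has a perfect `F`-tiling. -/
def HasPerfectTiling {W V : Type*} (F : EdgeOrderedGraph W) (G : EdgeOrderedGraph V) : Prop :=
  HasPerfectTilingOn F G Set.univ

/-- `F` is Turánable: some complete graph contains a copy of `F` under every edge-ordering. -/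
def Turanable {W : Type*} (F : EdgeOrderedGraph W) : Prop :=
  ∃ t : ℕ, ∀ G : EdgeOrderedGraph (Fin t), G.graph = ⊤ → G.ContainsCopy F

/-- `F` is tileable: some complete graph `K_t` with `|F| ∣ t` has a perfect `F`-tiling
under every edge-ordering. -/
def Tileable {W : Type*} [Fintype W] (F : EdgeOrderedGraph W) : Prop :=
  ∃ t : ℕ, 0 < t ∧ Fintype.card W ∣ t ∧
    ∀ G : EdgeOrderedGraph (Fin t), G.graph = ⊤ → HasPerfectTiling F G

/-- The degree of a vertex in an edge-ordered graph. -/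
noncomputable def degree {V : Type*} (G : EdgeOrderedGraph V) (v : V) : ℕ :=
  (G.graph.neighborSet v).ncard

end EdgeOrderedGraph

open EdgeOrderedGraph

/-- The monotone path `P_k^≤` with `k` edges: consecutive edges increase. -/
noncomputable def monotonePath (k : ℕ) : EdgeOrderedGraph (Fin (k + 1)) where
  graph := SimpleGraph.fromRel (fun a b => a.val + 1 = b.val)
  label := Sym2.lift ⟨fun a b => ((min a.val b.val : ℕ) : ℝ), fun a b => by simp [min_comm]⟩
  inj := by
    intro e₁ h₁ e₂ h₂ heq
    induction e₁ using Sym2.ind with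
    | _ a b =>
    induction e₂ using Sym2.ind with
    | _ c d =>
    rw [SimpleGraph.mem_edgeSet, SimpleGraph.fromRel_adj] at h₁ h₂
    simp only [Sym2.lift_mk] at heq
    have hm : min a.val b.val = min c.val d.val := Nat.cast_injective heq
    have hab : a.val ≠ b.val := fun h => h₁.1 (Fin.val_injective h)
    have hcd : c.val ≠ d.val := fun h => h₂.1 (Fin.val_injective h)
    have key : (a.val = c.val ∧ b.val = d.val) ∨ (a.val = d.val ∧ b.val = c.val) := by
      have h12 := h₁.2; have h22 := h₂.2; omega
    rw [Sym2.eq_iff]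
    rcases key with ⟨x, y⟩ | ⟨x, y⟩
    · exact Or.inl ⟨Fin.val_injective x, Fin.val_injective y⟩
    · exact Or.inr ⟨Fin.val_injective x, Fin.val_injective y⟩
/-- The standard labeling of the canonical ordering of type `t` of the complete graph on
`Fin n` (`t = 0`: min, `t = 1`: max, `t = 2`: inverse min, `t = 3`: inverse max).
Vertices are `0, …, n-1`, corresponding to `v₁, …, v_n`. -/
noncomputable def canonLabel (n : ℕ) (t : Fin 4) (a b : Fin n) : ℝ :=
  let i : ℝ := ((min a.val b.val : ℕ) : ℝ) + 1
  let j : ℝ := ((max a.val b.val : ℕ) : ℝ) + 1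
  if t = 0 then 2 * n * i + j - 1
  else if t = 1 then (2 * n - 1) * j + i
  else if t = 2 then (2 * n + 1) * i - j
  else 2 * n * j - i + n

/-- `G` is an edge-ordering of the complete graph on `Fin n` whose edge order agrees with
the canonical ordering of type `t`. -/
def IsCanonicalOrdering {n : ℕ} (G : EdgeOrderedGraph (Fin n)) (t : Fin 4) : Prop :=
  G.graph = ⊤ ∧ ∀ a b c d : Fin n, a ≠ b → c ≠ d →
    (G.label s(a, b) < G.label s(c, d) ↔ canonLabel n t a b < canonLabel n t c d)

/-- Standard labels of the edges at the special vertex in a ★-canonical ordering with `n`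
non-special vertices: `p = 0`: larger increasing, `p = 1`: larger decreasing,
`p = 2`: smaller increasing, `p = 3`: smaller decreasing, `p = 4`: middle increasing. -/
noncomputable def starVal (n : ℕ) (p : Fin 5) (i : Fin n) : ℝ :=
  if p = 0 then 3 * (n : ℝ) ^ 2 + ((i.val : ℝ) + 1)
  else if p = 1 then 3 * (n : ℝ) ^ 2 + (n : ℝ) - (i.val : ℝ)
  else if p = 2 then (i.val : ℝ) + 1
  else if p = 3 then (n : ℝ) - (i.val : ℝ)
  else 2 * (n : ℝ) * ((i.val : ℝ) + 1)

/-- The standard labeling of the ★-canonical ordering of the complete graph on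
`Option (Fin n)` with special vertex `none`, canonical part of type `t` and
special-vertex pattern `p`. -/
noncomputable def starLabel (n : ℕ) (t : Fin 4) (p : Fin 5) :
    Option (Fin n) → Option (Fin n) → ℝ
  | some a, some b => canonLabel n t a b
  | none, some i => starVal n p i
  | some i, none => starVal n p i
  | none, none => 0

/-- `G` is an edge-ordering of the complete graph on `Option (Fin n)` whose edge order
agrees with the ★-canonical ordering of type `(t, p)`, the special vertex being `none`. -/
def IsStarCanonical {n : ℕ} (G : EdgeOrderedGraph (Option (Fin n))) (t : Fin 4) (p : Fin 5) :
    Prop :=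
  G.graph = ⊤ ∧ ∀ u v w z : Option (Fin n), u ≠ v → w ≠ z →
    (G.label s(u, v) < G.label s(w, z) ↔ starLabel n t p u v < starLabel n t p w z)

lemma fin4_cases (t : Fin 4) : t = 0 ∨ t = 1 ∨ t = 2 ∨ t = 3 := by
  match t with
  | 0 => exact Or.inl rfl
  | 1 => exact Or.inr (Or.inl rfl)
  | 2 => exact Or.inr (Or.inr (Or.inl rfl))
  | 3 => exact Or.inr (Or.inr (Or.inr rfl))

/-- Lexicographic comparison rules corresponding to the four canonical orderings,
on pairs `(i,j)` with `i < j` (values of min and max). -/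
def elex (t : Fin 4) (i j k l : ℕ) : Prop :=
  if t.val = 0 then i < k ∨ (i = k ∧ j < l)
  else if t.val = 1 then j < l ∨ (j = l ∧ i < k)
  else if t.val = 2 then i < k ∨ (i = k ∧ l < j)
  else j < l ∨ (j = l ∧ k < i)

lemma elex0 (i j k l : ℕ) : elex 0 i j k l ↔ (i < k ∨ (i = k ∧ j < l)) := by simp [elex]
lemma elex1 (i j k l : ℕ) : elex 1 i j k l ↔ (j < l ∨ (j = l ∧ i < k)) := by simp [elex]
lemma elex2 (i j k l : ℕ) : elex 2 i j k l ↔ (i < k ∨ (i = k ∧ l < j)) := by simp [elex]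
lemma elex3 (i j k l : ℕ) : elex 3 i j k l ↔ (j < l ∨ (j = l ∧ k < i)) := by
  simp [elex, show ((3:Fin 4)).val = 3 from rfl]

lemma lexkey {M i j k l : ℤ} (h0j : 0 ≤ j) (hj : j < M) (h0l : 0 ≤ l) (hl : l < M) :
    M * i + j < M * k + l ↔ i < k ∨ (i = k ∧ j < l) := by
  have hM : 0 < M := lt_of_le_of_lt h0j hj
  constructor
  · intro h
    rcases lt_trichotomy i k with h' | h' | h'
    · exact Or.inl h'
    · subst h'; exact Or.inr ⟨rfl, by linarith⟩
    · exfalso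
      have : M * (k + 1) ≤ M * i := mul_le_mul_of_nonneg_left (by omega) (le_of_lt hM)
      nlinarith
  · rintro (h | ⟨rfl, h⟩)
    · have : M * (i + 1) ≤ M * k := mul_le_mul_of_nonneg_left (by omega) (le_of_lt hM)
      nlinarith
    · linarith

/-- `canonLabel` as a function of the min value `i` and max value `j`. -/
noncomputable def clab (n : ℕ) (t : Fin 4) (i j : ℕ) : ℝ :=
  if t = 0 then 2 * n * ((i:ℝ) + 1) + ((j:ℝ) + 1) - 1
  else if t = 1 then (2 * n - 1) * ((j:ℝ) + 1) + ((i:ℝ) + 1)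
  else if t = 2 then (2 * n + 1) * ((i:ℝ) + 1) - ((j:ℝ) + 1)
  else 2 * n * ((j:ℝ) + 1) - ((i:ℝ) + 1) + n

lemma canonLabel_eq_clab (n : ℕ) (t : Fin 4) (a b : Fin n) :
    canonLabel n t a b = clab n t (min a.val b.val) (max a.val b.val) := rfl

lemma clab_lt_iff (n : ℕ) (t : Fin 4) {i j k l : ℕ} (hij : i < j) (hjn : j < n)
    (hkl : k < l) (hln : l < n) :
    clab n t i j < clab n t k l ↔ elex t i j k l := by
  have hn : 2 ≤ n := by omega
  rcases fin4_cases t with rfl | rfl | rfl | rfl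
  · have e : ∀ i j : ℕ, clab n 0 i j = ((2*(n:ℤ)*(i+1)+(j+1)-1 : ℤ) : ℝ) := by
      intro i j; simp [clab]; try push_cast; try ring
    rw [e, e, Int.cast_lt, elex0]
    have key := lexkey (M := 2*(n:ℤ)) (i := (i:ℤ)+1) (j := (j:ℤ)+1) (k := (k:ℤ)+1)
      (l := (l:ℤ)+1) (by omega) (by omega) (by omega) (by omega)
    constructor
    · intro h; have h2 := key.mp (by linarith); omega
    · intro h; have h2 := key.mpr (by omega); linarith
  · have e : ∀ i j : ℕ, clab n 1 i j = (((2*(n:ℤ)-1)*(j+1)+(i+1) : ℤ) : ℝ) := by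
      intro i j; simp [clab]; try push_cast; try ring
    rw [e, e, Int.cast_lt, elex1]
    have key := lexkey (M := 2*(n:ℤ)-1) (i := (j:ℤ)+1) (j := (i:ℤ)+1) (k := (l:ℤ)+1)
      (l := (k:ℤ)+1) (by omega) (by omega) (by omega) (by omega)
    constructor
    · intro h; have h2 := key.mp (by linarith); omega
    · intro h; have h2 := key.mpr (by omega); linarith
  · have e : ∀ i j : ℕ, clab n 2 i j = (((2*(n:ℤ)+1)*(i+1)-(j+1) : ℤ) : ℝ) := by
      intro i j; simp [clab]; try push_cast; try ring
    rw [e, e, Int.cast_lt, elex2]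
    have key := lexkey (M := 2*(n:ℤ)+1) (i := (i:ℤ)+1) (j := (n:ℤ)-(j+1)) (k := (k:ℤ)+1)
      (l := (n:ℤ)-(l+1)) (by omega) (by omega) (by omega) (by omega)
    constructor
    · intro h; have h2 := key.mp (by linarith); omega
    · intro h; have h2 := key.mpr (by omega); linarith
  · have e : ∀ i j : ℕ, clab n 3 i j = ((2*(n:ℤ)*(j+1)-(i+1)+n : ℤ) : ℝ) := by
      intro i j; simp [clab]; try push_cast; try ring
    rw [e, e, Int.cast_lt, elex3]
    have key := lexkey (M := 2*(n:ℤ)) (i := (j:ℤ)+1) (j := (n:ℤ)-(i+1)) (k := (l:ℤ)+1)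
      (l := (n:ℤ)-(k+1)) (by omega) (by omega) (by omega) (by omega)
    constructor
    · intro h; have h2 := key.mp (by linarith); omega
    · intro h; have h2 := key.mpr (by omega); linarith

lemma canonLabel_lt_iff {n : ℕ} (t : Fin 4) (a b c d : Fin n) (hab : a ≠ b) (hcd : c ≠ d) :
    canonLabel n t a b < canonLabel n t c d ↔
      elex t (min a.val b.val) (max a.val b.val) (min c.val d.val) (max c.val d.val) := by
  have hab' : a.val ≠ b.val := fun h => hab (Fin.val_injective h)
  have hcd' : c.val ≠ d.val := fun h => hcd (Fin.val_injective h)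
  rw [canonLabel_eq_clab, canonLabel_eq_clab]
  exact clab_lt_iff n t (by omega) (by have := a.isLt; have := b.isLt; omega)
    (by omega) (by have := c.isLt; have := d.isLt; omega)

lemma elex_trichotomy (t : Fin 4) {i j k l : ℕ} (hij : i < j) (hkl : k < l) :
    elex t i j k l ∨ elex t k l i j ∨ (i = k ∧ j = l) := by
  rcases fin4_cases t with rfl | rfl | rfl | rfl <;>
    simp only [elex0, elex1, elex2, elex3] <;> omega

lemma elex_asymm (t : Fin 4) {i j k l : ℕ} (h : elex t i j k l) : ¬ elex t k l i j := by
  rcases fin4_cases t with rfl | rfl | rfl | rfl <;>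
    simp only [elex0, elex1, elex2, elex3] at * <;> omega
section Ramsey

open Finset

variable {α : Type} [LinearOrder α] [Nonempty α] {κ : Type} [Fintype κ] [Nonempty κ]

/-- The Ramsey property for `r`-subsets, `κ` colors, target size `m`, threshold `N`. -/
def RamseyProp (α : Type) [LinearOrder α] (κ : Type) (r m N : ℕ) : Prop :=
  ∀ (c : Finset α → κ) (A : Finset α), N ≤ A.card →
    ∃ S ⊆ A, m ≤ S.card ∧ ∃ col, ∀ B ⊆ S, B.card = r → c B = col

lemma ramsey_step (r : ℕ) (ih : ∀ m, ∃ N, RamseyProp α κ r m N) :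
    ∀ j : ℕ, ∃ N, ∀ (c : Finset α → κ) (A : Finset α), N ≤ A.card →
        ∃ (g : ℕ → α) (colf : ℕ → κ),
          (∀ i i', i < i' → i' < j → g i < g i') ∧ (∀ i, i < j → g i ∈ A) ∧
          (∀ i, i < j → ∀ B : Finset α,
            (∀ x ∈ B, ∃ i', i < i' ∧ i' < j ∧ x = g i') → B.card = r →
              c (insert (g i) B) = colf i) := by
  classical
  intro j
  induction j with
  | zero =>
    exact ⟨0, fun _ A _ => ⟨fun _ => Classical.arbitrary α, fun _ => Classical.arbitrary κ,
      fun _ _ _ h => absurd h (Nat.not_lt_zero _), fun _ h => absurd h (Nat.not_lt_zero _),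
      fun _ h => absurd h (Nat.not_lt_zero _)⟩⟩
  | succ j ihj =>
    obtain ⟨Nj, hNj⟩ := ihj
    obtain ⟨Nr, hNr⟩ := ih Nj
    refine ⟨Nr + 1, fun c A hA => ?_⟩
    have hAne : A.Nonempty := card_pos.mp (by omega)
    set a := A.min' hAne with ha
    have haA : a ∈ A := A.min'_mem hAne
    have hcard : Nr ≤ (A.erase a).card := by
      rw [card_erase_of_mem haA]; omega
    obtain ⟨S, hSsub, hScard, col, hcol⟩ := hNr (fun B => c (insert a B)) (A.erase a) hcard
    obtain ⟨g, colf, hmono, hmem, hhom⟩ := hNj c S hScard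
    refine ⟨fun i => if i = 0 then a else g (i - 1),
      fun i => if i = 0 then col else colf (i - 1), ?_, ?_, ?_⟩
    · intro i i' hii' hi'
      rcases Nat.eq_zero_or_pos i with rfl | hi0
      · simp only [if_pos rfl, if_neg (by omega : i' ≠ 0)]
        have hg : g (i' - 1) ∈ A.erase a := hSsub (hmem _ (by omega))
        have := A.min'_le _ (mem_of_mem_erase hg)
        exact lt_of_le_of_ne this (Ne.symm (ne_of_mem_erase hg))
      · simp only [if_neg (by omega : i ≠ 0), if_neg (by omega : i' ≠ 0)]
        exact hmono _ _ (by omega) (by omega)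
    · intro i hi
      rcases Nat.eq_zero_or_pos i with rfl | hi0
      · simpa using haA
      · simp only [if_neg (by omega : i ≠ 0)]
        exact mem_of_mem_erase (hSsub (hmem _ (by omega)))
    · intro i hi B hB hBcard
      rcases Nat.eq_zero_or_pos i with rfl | hi0
      · simp only [if_pos rfl]
        refine hcol B ?_ hBcard
        intro x hx
        obtain ⟨i', hi'0, hi', rfl⟩ := hB x hx
        simp only [if_neg (by omega : i' ≠ 0)]
        exact hmem _ (by omega)
      · simp only [if_neg (by omega : i ≠ 0)]
        refine hhom (i - 1) (by omega) B ?_ hBcard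
        intro x hx
        obtain ⟨i', hi'0, hi', rfl⟩ := hB x hx
        exact ⟨i' - 1, by omega, by omega, by simp only [if_neg (by omega : i' ≠ 0)]⟩

theorem ramsey_exists : ∀ r m : ℕ, ∃ N, RamseyProp α κ r m N := by
  classical
  intro r
  induction r with
  | zero =>
    intro m
    refine ⟨m, fun c A hA => ⟨A, Finset.Subset.refl A, hA, c ∅, fun B _ hB => ?_⟩⟩
    rw [Finset.card_eq_zero.mp hB]
  | succ r ih =>
    intro m
    set M := Fintype.card κ * m + 1 with hM
    obtain ⟨N, hN⟩ := ramsey_step (α := α) (κ := κ) r ih M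
    refine ⟨N, fun c A hA => ?_⟩
    obtain ⟨g, colf, hmono, hmem, hhom⟩ := hN c A hA
    obtain ⟨col, _, hcol⟩ := Finset.exists_lt_card_fiber_of_mul_lt_card_of_maps_to
      (s := Finset.range M) (t := Finset.univ) (f := colf) (n := m)
      (fun i _ => Finset.mem_univ _) (by simp [hM, Nat.mul_comm])
    set I := (Finset.range M).filter (fun i => colf i = col) with hI
    have hginj : Set.InjOn g I := by
      intro x hx y hy hxy
      by_contra hne
      rcases Nat.lt_or_ge x y with h | h
      · exact absurd hxy (ne_of_lt (hmono x y h (by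
          have := Finset.mem_range.mp (Finset.mem_filter.mp hy).1; omega)))
      · have hyx : y < x := by omega
        exact absurd hxy.symm (ne_of_lt (hmono y x hyx (by
          have := Finset.mem_range.mp (Finset.mem_filter.mp hx).1; omega)))
    refine ⟨I.image g, ?_, ?_, col, ?_⟩
    · intro x hx
      obtain ⟨i, hi, rfl⟩ := Finset.mem_image.mp hx
      exact hmem i (Finset.mem_range.mp (Finset.mem_filter.mp hi).1)
    · rw [Finset.card_image_of_injOn hginj]; omega
    · intro B hB hBcard
      have hBne : B.Nonempty := Finset.card_pos.mp (by omega)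
      set b := B.min' hBne with hb
      have hbB : b ∈ B := B.min'_mem hBne
      obtain ⟨i₀, hi₀I, hgi₀⟩ := Finset.mem_image.mp (hB hbB)
      have hi₀M : i₀ < M := Finset.mem_range.mp (Finset.mem_filter.mp hi₀I).1
      have hkey : ∀ x ∈ B.erase b, ∃ i', i₀ < i' ∧ i' < M ∧ x = g i' := by
        intro x hx
        obtain ⟨ix, hixI, hgix⟩ := Finset.mem_image.mp (hB (Finset.mem_of_mem_erase hx))
        have hixM : ix < M := Finset.mem_range.mp (Finset.mem_filter.mp hixI).1
        have hxb : b < x := lt_of_le_of_ne (B.min'_le x (Finset.mem_of_mem_erase hx))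
          (Ne.symm (Finset.ne_of_mem_erase hx))
        have : i₀ < ix := by
          by_contra hle
          rcases Nat.lt_or_ge ix i₀ with h | h
          · have h2 := hmono ix i₀ h hi₀M
            rw [hgix, hgi₀] at h2
            exact absurd hxb (not_lt.mpr (le_of_lt h2))
          · have : ix = i₀ := by omega
            subst this; rw [hgix] at hgi₀; subst hgi₀; exact absurd rfl (ne_of_gt hxb)
        exact ⟨ix, this, hixM, hgix.symm⟩
      have herase : (B.erase b).card = r := by
        rw [Finset.card_erase_of_mem hbB, hBcard]; omega
      have := hhom i₀ hi₀M (B.erase b) hkey herase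
      rw [hgi₀, Finset.insert_erase hbB] at this
      rw [this, (Finset.mem_filter.mp hi₀I).2]

end Ramsey
section Classify

variable {lab : ℕ → ℕ → ℝ} {m : ℕ}

/-- homogeneity for increasing 4-tuples -/
def Hom4 (lab : ℕ → ℕ → ℝ) (m : ℕ) : Prop :=
  ∀ a b c d a' b' c' d' : ℕ, a<b → b<c → c<d → d< m → a'<b' → b'<c' → c'<d' → d'< m →
    ∀ q1 q2 q3 q4 : Fin 4,
      (lab (![a,b,c,d] q1) (![a,b,c,d] q2) < lab (![a,b,c,d] q3) (![a,b,c,d] q4) ↔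
       lab (![a',b',c',d'] q1) (![a',b',c',d'] q2) < lab (![a',b',c',d'] q3) (![a',b',c',d'] q4))

lemma hom3_of_hom4 (hm : 5 ≤ m) (hom4 : Hom4 lab m) :
    ∀ a b c a' b' c' : ℕ, a<b → b<c → c< m → a'<b' → b'<c' → c'< m →
    ∀ q1 q2 q3 q4 : Fin 3,
      (lab (![a,b,c] q1) (![a,b,c] q2) < lab (![a,b,c] q3) (![a,b,c] q4) ↔
       lab (![a',b',c'] q1) (![a',b',c'] q2) < lab (![a',b',c'] q3) (![a',b',c'] q4)) := by
  have bridge : ∀ (A A' : Fin 4 → ℕ) (emb : Fin 3 → Fin 4) (x x' : Fin 3 → ℕ),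
      (∀ q, A (emb q) = x q) → (∀ q, A' (emb q) = x' q) →
      (∀ q1 q2 q3 q4 : Fin 4,
        (lab (A q1) (A q2) < lab (A q3) (A q4) ↔ lab (A' q1) (A' q2) < lab (A' q3) (A' q4))) →
      ∀ q1 q2 q3 q4 : Fin 3,
        (lab (x q1) (x q2) < lab (x q3) (x q4) ↔ lab (x' q1) (x' q2) < lab (x' q3) (x' q4)) := by
    intro A A' emb x x' hx hx' hbig q1 q2 q3 q4
    rw [← hx q1, ← hx q2, ← hx q3, ← hx q4, ← hx' q1, ← hx' q2, ← hx' q3, ← hx' q4]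
    exact hbig (emb q1) (emb q2) (emb q3) (emb q4)
  have stepA : ∀ a b c, a<b → b<c → c+1 < m → ∀ q1 q2 q3 q4 : Fin 3,
      (lab (![a,b,c] q1) (![a,b,c] q2) < lab (![a,b,c] q3) (![a,b,c] q4) ↔
       lab (![0,1,2] q1) (![0,1,2] q2) < lab (![0,1,2] q3) (![0,1,2] q4)) := by
    intro a b c hab hbc hcm
    exact bridge ![a,b,c,m-1] ![0,1,2,m-1] ![0,1,2] ![a,b,c] ![0,1,2]
      (by intro q; fin_cases q <;> rfl) (by intro q; fin_cases q <;> rfl)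
      (hom4 a b c (m-1) 0 1 2 (m-1) hab hbc (by omega) (by omega) (by omega) (by omega)
        (by omega) (by omega))
  have main : ∀ a b c, a<b → b<c → c< m → ∀ q1 q2 q3 q4 : Fin 3,
      (lab (![a,b,c] q1) (![a,b,c] q2) < lab (![a,b,c] q3) (![a,b,c] q4) ↔
       lab (![0,1,2] q1) (![0,1,2] q2) < lab (![0,1,2] q3) (![0,1,2] q4)) := by
    intro a b c hab hbc hcm
    by_cases h1 : c + 1 < m
    · exact stepA a b c hab hbc h1
    · by_cases h2 : b + 1 < c
      · have e1 := bridge ![a,b,c-1,c] ![0,1,2,3] ![0,1,3] ![a,b,c] ![0,1,3]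
          (by intro q; fin_cases q <;> simp <;> omega)
          (by intro q; fin_cases q <;> rfl)
          (hom4 a b (c-1) c 0 1 2 3 hab (by omega) (by omega) (by omega) (by omega)
            (by omega) (by omega) (by omega))
        have e2 := stepA 0 1 3 (by omega) (by omega) (by omega)
        intro q1 q2 q3 q4
        exact (e1 q1 q2 q3 q4).trans (e2 q1 q2 q3 q4)
      · by_cases h3 : a + 1 < b
        · have e1 := bridge ![a,b-1,b,c] ![0,1,2,3] ![0,2,3] ![a,b,c] ![0,2,3]
            (by intro q; fin_cases q <;> simp <;> omega)
            (by intro q; fin_cases q <;> rfl)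
            (hom4 a (b-1) b c 0 1 2 3 (by omega) (by omega) hbc (by omega) (by omega)
              (by omega) (by omega) (by omega))
          have e2 := stepA 0 2 3 (by omega) (by omega) (by omega)
          intro q1 q2 q3 q4
          exact (e1 q1 q2 q3 q4).trans (e2 q1 q2 q3 q4)
        · have ha : 0 < a := by omega
          have e1 := bridge ![0,a,b,c] ![0,1,2,3] ![1,2,3] ![a,b,c] ![1,2,3]
            (by intro q; fin_cases q <;> rfl)
            (by intro q; fin_cases q <;> rfl)
            (hom4 0 a b c 0 1 2 3 ha hab hbc (by omega) (by omega) (by omega) (by omega)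
              (by omega))
          have e2 := stepA 1 2 3 (by omega) (by omega) (by omega)
          intro q1 q2 q3 q4
          exact (e1 q1 q2 q3 q4).trans (e2 q1 q2 q3 q4)
  intro a b c a' b' c' hab hbc hcm hab' hbc' hcm' q1 q2 q3 q4
  exact (main a b c hab hbc hcm q1 q2 q3 q4).trans (main a' b' c' hab' hbc' hcm' q1 q2 q3 q4).symm

example (hm : 5 ≤ m) (hom4 : Hom4 lab m) (a b c : ℕ) (hab : a < b) (hbc : b < c) (hcm : c < m) :
    (lab a b < lab a c ↔ lab 0 1 < lab 0 2) :=
  hom3_of_hom4 hm hom4 a b c 0 1 2 hab hbc hcm (by omega) (by omega) (by omega) 0 1 0 2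

example (hm : 5 ≤ m) (hom4 : Hom4 lab m) (a b c d : ℕ) (hab : a < b) (hbc : b < c)
    (hcd : c < d) (hdm : d < m) : (lab a d < lab b c ↔ lab 0 3 < lab 1 2) :=
  hom4 a b c d 0 1 2 3 hab hbc hcd hdm (by omega) (by omega) (by omega) (by omega) 0 3 1 2

end Classify
/-- Comparison rule determined by the pattern bits. -/
def rule (P R U Q : Prop) (i j k l : ℕ) : Prop :=
  if i = k ∧ j < l then P
  else if i = k ∧ l < j then ¬P
  else if j = l ∧ i < k then R
  else if j = l ∧ k < i then ¬R
  else if j ≤ k ∨ (i < k ∧ j < l) then Q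
  else if l ≤ i ∨ (k < i ∧ l < j) then ¬Q
  else if i < k then U
  else if k < i then ¬U
  else False

section Classify2

variable {lab : ℕ → ℕ → ℝ} {m : ℕ}

set_option maxHeartbeats 1600000 in
lemma classify (hm : 5 ≤ m)
    (hinj : ∀ i j k l, i < j → j < m → k < l → l < m → lab i j = lab k l → i = k ∧ j = l)
    (hom4 : Hom4 lab m) :
    ∃ (t : Fin 4) (e : ℕ → ℕ), (∀ i, i < m → e i < m) ∧
      (∀ i j, i < m → j < m → i ≠ j → e i ≠ e j) ∧
      ∀ i j k l, i < j → j < m → k < l → l < m →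
        (lab (min (e i) (e j)) (max (e i) (e j)) < lab (min (e k) (e l)) (max (e k) (e l)) ↔
          elex t i j k l) := by
  classical
  have hflip : ∀ i j k l, i < j → j < m → k < l → l < m → ¬(i = k ∧ j = l) →
      (¬ (lab i j < lab k l) ↔ lab k l < lab i j) := by
    intro i j k l hij hjm hkl hlm hne
    constructor
    · intro h
      rcases lt_trichotomy (lab i j) (lab k l) with h' | h' | h'
      · exact absurd h' h
      · exact absurd (hinj _ _ _ _ hij hjm hkl hlm h') hne
      · exact h'
    · intro h; exact lt_asymm h
  have hom3 := hom3_of_hom4 hm hom4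
  -- pattern instance lemmas
  have hp : ∀ a b c, a < b → b < c → c < m → (lab a b < lab a c ↔ lab 0 1 < lab 0 2) :=
    fun a b c hab hbc hcm =>
      hom3 a b c 0 1 2 hab hbc hcm (by omega) (by omega) (by omega) 0 1 0 2
  have hq : ∀ a b c, a < b → b < c → c < m → (lab a b < lab b c ↔ lab 0 1 < lab 1 2) :=
    fun a b c hab hbc hcm =>
      hom3 a b c 0 1 2 hab hbc hcm (by omega) (by omega) (by omega) 0 1 1 2
  have hr : ∀ a b c, a < b → b < c → c < m → (lab a c < lab b c ↔ lab 0 2 < lab 1 2) :=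
    fun a b c hab hbc hcm =>
      hom3 a b c 0 1 2 hab hbc hcm (by omega) (by omega) (by omega) 0 2 1 2
  have hs : ∀ a b c d, a < b → b < c → c < d → d < m →
      (lab a b < lab c d ↔ lab 0 1 < lab 2 3) := fun a b c d hab hbc hcd hdm =>
    hom4 a b c d 0 1 2 3 hab hbc hcd hdm (by omega) (by omega) (by omega) (by omega) 0 1 2 3
  have hu : ∀ a b c d, a < b → b < c → c < d → d < m →
      (lab a d < lab b c ↔ lab 0 3 < lab 1 2) := fun a b c d hab hbc hcd hdm =>
    hom4 a b c d 0 1 2 3 hab hbc hcd hdm (by omega) (by omega) (by omega) (by omega) 0 3 1 2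
  have hv : ∀ a b c d, a < b → b < c → c < d → d < m →
      (lab a c < lab b d ↔ lab 0 2 < lab 1 3) := fun a b c d hab hbc hcd hdm =>
    hom4 a b c d 0 1 2 3 hab hbc hcd hdm (by omega) (by omega) (by omega) (by omega) 0 2 1 3
  -- constraints among the pattern bits
  have hsq : (lab 0 1 < lab 2 3) ↔ (lab 0 1 < lab 1 2) := by
    constructor
    · intro hS; by_contra hnQ
      have h1 : lab 1 2 < lab 0 1 :=
        (hflip 0 1 1 2 (by omega) (by omega) (by omega) (by omega) (by omega)).mp
          ((hq 0 1 2 (by omega) (by omega) (by omega)).not.mpr hnQ)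
      have h2 : lab 2 3 < lab 1 2 :=
        (hflip 1 2 2 3 (by omega) (by omega) (by omega) (by omega) (by omega)).mp
          ((hq 1 2 3 (by omega) (by omega) (by omega)).not.mpr hnQ)
      exact lt_asymm hS (lt_trans h2 h1)
    · intro hQ
      exact lt_trans hQ ((hq 1 2 3 (by omega) (by omega) (by omega)).mpr hQ)
  have hvq : (lab 0 2 < lab 1 3) ↔ (lab 0 1 < lab 1 2) := by
    constructor
    · intro hV; by_contra hnQ
      by_cases hR : lab 0 2 < lab 1 2
      · have h1 : lab 1 3 < lab 2 3 := (hr 1 2 3 (by omega) (by omega) (by omega)).mpr hR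
        have h2 : lab 2 3 < lab 0 2 :=
          (hflip 0 2 2 3 (by omega) (by omega) (by omega) (by omega) (by omega)).mp
            ((hq 0 2 3 (by omega) (by omega) (by omega)).not.mpr hnQ)
        exact lt_asymm hV (lt_trans h1 h2)
      · by_cases hP : lab 0 1 < lab 0 2
        · have h1 : lab 1 3 < lab 0 1 :=
            (hflip 0 1 1 3 (by omega) (by omega) (by omega) (by omega) (by omega)).mp
              ((hq 0 1 3 (by omega) (by omega) (by omega)).not.mpr hnQ)
          exact lt_asymm hV (lt_trans h1 hP)
        · have h1 : lab 1 3 < lab 0 3 :=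
            (hflip 0 3 1 3 (by omega) (by omega) (by omega) (by omega) (by omega)).mp
              ((hr 0 1 3 (by omega) (by omega) (by omega)).not.mpr hR)
          have h2 : lab 0 3 < lab 0 2 :=
            (hflip 0 2 0 3 (by omega) (by omega) (by omega) (by omega) (by omega)).mp
              ((hp 0 2 3 (by omega) (by omega) (by omega)).not.mpr hP)
          exact lt_asymm hV (lt_trans h1 h2)
    · intro hQ
      by_cases hP : lab 0 1 < lab 0 2
      · by_cases hR : lab 0 2 < lab 1 2
        · exact lt_trans ((hp 0 2 3 (by omega) (by omega) (by omega)).mpr hP)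
            ((hr 0 1 3 (by omega) (by omega) (by omega)).mpr hR)
        · have h1 : lab 0 2 < lab 2 3 := (hq 0 2 3 (by omega) (by omega) (by omega)).mpr hQ
          have h2 : lab 2 3 < lab 1 3 :=
            (hflip 1 3 2 3 (by omega) (by omega) (by omega) (by omega) (by omega)).mp
              ((hr 1 2 3 (by omega) (by omega) (by omega)).not.mpr hR)
          exact lt_trans h1 h2
      · have h1 : lab 0 2 < lab 0 1 :=
          (hflip 0 1 0 2 (by omega) (by omega) (by omega) (by omega) (by omega)).mp
            ((hp 0 1 2 (by omega) (by omega) (by omega)).not.mpr hP)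
        have h2 : lab 0 1 < lab 1 3 := (hq 0 1 3 (by omega) (by omega) (by omega)).mpr hQ
        exact lt_trans h1 h2
  have hprq : (lab 0 1 < lab 0 2) → (lab 0 2 < lab 1 2) → (lab 0 1 < lab 1 2) :=
    fun hP hR => lt_trans hP hR
  have hqpr : (lab 0 1 < lab 1 2) → (lab 0 1 < lab 0 2) ∨ (lab 0 2 < lab 1 2) := by
    intro hQ; by_contra hn
    rw [not_or] at hn
    have h1 : lab 0 2 < lab 0 1 :=
      (hflip 0 1 0 2 (by omega) (by omega) (by omega) (by omega) (by omega)).mp hn.1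
    have h2 : lab 1 2 < lab 0 2 :=
      (hflip 0 2 1 2 (by omega) (by omega) (by omega) (by omega) (by omega)).mp hn.2
    exact lt_asymm hQ (lt_trans h2 h1)
  have hex1 : ¬(lab 0 1 < lab 0 2) → (lab 0 2 < lab 1 2) → (lab 0 3 < lab 1 2) := by
    intro hnP hR; by_contra hnU
    have h1 : lab 1 2 < lab 0 3 :=
      (hflip 0 3 1 2 (by omega) (by omega) (by omega) (by omega) (by omega)).mp hnU
    have h2 : lab 0 3 < lab 0 2 :=
      (hflip 0 2 0 3 (by omega) (by omega) (by omega) (by omega) (by omega)).mp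
        ((hp 0 2 3 (by omega) (by omega) (by omega)).not.mpr hnP)
    have h3 : lab 0 2 < lab 1 2 := hR
    exact lt_irrefl _ (lt_trans (lt_trans h1 h2) h3)
  have hex2 : (lab 0 1 < lab 0 2) → ¬(lab 0 2 < lab 1 2) → ¬(lab 0 3 < lab 1 2) := by
    intro hP hnR hU
    have h2 : lab 1 2 < lab 1 3 := (hp 1 2 3 (by omega) (by omega) (by omega)).mpr hP
    have h3 : lab 1 3 < lab 0 3 :=
      (hflip 0 3 1 3 (by omega) (by omega) (by omega) (by omega) (by omega)).mp
        ((hr 0 1 3 (by omega) (by omega) (by omega)).not.mpr hnR)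
    exact lt_irrefl _ (lt_trans (lt_trans hU h2) h3)
  -- the general comparison lemma
  have genL : ∀ i j k l, i < j → j < m → k < l → l < m →
      ((lab i j < lab k l) ↔
        rule (lab 0 1 < lab 0 2) (lab 0 2 < lab 1 2) (lab 0 3 < lab 1 2)
          (lab 0 1 < lab 1 2) i j k l) := by
    intro i j k l hij hjm hkl hlm
    unfold rule
    split_ifs with h1 h2 h3 h4 h5 h6 h7 h8
    · obtain ⟨rfl, hjl⟩ := h1
      exact hp i j l hij hjl hlm
    · obtain ⟨rfl, hlj⟩ := h2
      rw [← hp i l j hkl hlj hjm]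
      exact (hflip i l i j hkl hlm hij hjm (by omega)).symm
    · obtain ⟨rfl, hik⟩ := h3
      exact hr i k j hik hkl hjm
    · obtain ⟨rfl, hki⟩ := h4
      rw [← hr k i j hki hij hjm]
      exact (hflip k j i j hkl hjm hij hjm (by omega)).symm
    · by_cases hjk : j ≤ k
      · rcases eq_or_lt_of_le hjk with rfl | hjk'
        · exact hq i j l hij hkl hlm
        · exact (hs i j k l hij hjk' hkl hlm).trans hsq
      · have hik : i < k ∧ j < l := by
          rcases h5 with h | h
          · exact absurd h hjk
          · exact h
        exact (hv i k j l hik.1 (by omega) hik.2 hlm).trans hvq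
    · have base : ¬(lab k l < lab i j) ↔ lab i j < lab k l :=
        hflip k l i j hkl hlm hij hjm (by omega)
      rw [← base]
      have key : lab k l < lab i j ↔ lab 0 1 < lab 1 2 := by
        by_cases hli : l ≤ i
        · rcases eq_or_lt_of_le hli with rfl | hli'
          · exact hq k l j hkl hij hjm
          · exact (hs k l i j hkl hli' hij hjm).trans hsq
        · have hki : k < i ∧ l < j := by
            rcases h6 with h | h
            · exact absurd h hli
            · exact h
          exact (hv k i l j hki.1 (by omega) hki.2 hjm).trans hvq
      exact not_congr key
    · have hlj : l < j := by omega
      exact hu i k l j h7 hkl hlj hjm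
    · have hjl : j < l := by omega
      have base : ¬(lab k l < lab i j) ↔ lab i j < lab k l :=
        hflip k l i j hkl hlm hij hjm (by omega)
      rw [← base]
      exact not_congr (hu k i j l h8 hij hjl hlm)
    · have : i = k ∧ j = l := by omega
      obtain ⟨rfl, rfl⟩ := this
      simp [lt_irrefl]
  -- case analysis on the four pattern bits
  by_cases hP : lab 0 1 < lab 0 2 <;> by_cases hR : lab 0 2 < lab 1 2 <;>
    by_cases hQ : lab 0 1 < lab 1 2 <;> by_cases hU : lab 0 3 < lab 1 2
  -- TTTT : min ordering
  · refine ⟨0, id, fun i h => h, fun i j _ _ h => by simpa using h, ?_⟩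
    intro i j k l hij hjm hkl hlm
    simp only [id_eq]
    rw [min_eq_left hij.le, max_eq_right hij.le, min_eq_left hkl.le, max_eq_right hkl.le,
      genL i j k l hij hjm hkl hlm, elex0]
    unfold rule
    split_ifs <;>
      first
        | exact iff_of_true ‹_› (by omega)
        | exact iff_of_false ‹_› (by omega)
        | exact iff_of_false (not_not_intro ‹_›) (by omega)
        | exact iff_of_false not_false (by omega)
  -- TTTF : max ordering
  · refine ⟨1, id, fun i h => h, fun i j _ _ h => by simpa using h, ?_⟩
    intro i j k l hij hjm hkl hlm
    simp only [id_eq]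
    rw [min_eq_left hij.le, max_eq_right hij.le, min_eq_left hkl.le, max_eq_right hkl.le,
      genL i j k l hij hjm hkl hlm, elex1]
    unfold rule
    split_ifs <;>
      first
        | exact iff_of_true ‹_› (by omega)
        | exact iff_of_false ‹_› (by omega)
        | exact iff_of_false (not_not_intro ‹_›) (by omega)
        | exact iff_of_false not_false (by omega)
  -- TTFT : impossible
  · exact absurd (hprq hP hR) hQ
  -- TTFF : impossible
  · exact absurd (hprq hP hR) hQ
  -- TFTT : impossible
  · exact absurd hU (hex2 hP hR)
  -- TFTF : inverse max ordering
  · refine ⟨3, id, fun i h => h, fun i j _ _ h => by simpa using h, ?_⟩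
    intro i j k l hij hjm hkl hlm
    simp only [id_eq]
    rw [min_eq_left hij.le, max_eq_right hij.le, min_eq_left hkl.le, max_eq_right hkl.le,
      genL i j k l hij hjm hkl hlm, elex3]
    unfold rule
    split_ifs <;>
      first
        | exact iff_of_true ‹_› (by omega)
        | exact iff_of_false ‹_› (by omega)
        | exact iff_of_false (not_not_intro ‹_›) (by omega)
        | exact iff_of_false not_false (by omega)
  -- TFFT : impossible
  · exact absurd hU (hex2 hP hR)
  -- TFFF : reversed inverse min
  · refine ⟨3, fun x => m - 1 - x, fun i h => by show m - 1 - i < m; omega, fun i j hi hj hne => by show m - 1 - i ≠ m - 1 - j; omega, ?_⟩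
    intro i j k l hij hjm hkl hlm
    show lab (min (m-1-i) (m-1-j)) (max (m-1-i) (m-1-j)) <
      lab (min (m-1-k) (m-1-l)) (max (m-1-k) (m-1-l)) ↔ _
    have e1 : min (m-1-i) (m-1-j) = m-1-j := by omega
    have e2 : max (m-1-i) (m-1-j) = m-1-i := by omega
    have e3 : min (m-1-k) (m-1-l) = m-1-l := by omega
    have e4 : max (m-1-k) (m-1-l) = m-1-k := by omega
    rw [e1, e2, e3, e4,
      genL (m-1-j) (m-1-i) (m-1-l) (m-1-k) (by omega) (by omega) (by omega) (by omega), elex3]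
    unfold rule
    split_ifs <;>
      first
        | exact iff_of_true ‹_› (by omega)
        | exact iff_of_false ‹_› (by omega)
        | exact iff_of_false (not_not_intro ‹_›) (by omega)
        | exact iff_of_false not_false (by omega)
  -- FTTT : inverse min ordering
  · refine ⟨2, id, fun i h => h, fun i j _ _ h => by simpa using h, ?_⟩
    intro i j k l hij hjm hkl hlm
    simp only [id_eq]
    rw [min_eq_left hij.le, max_eq_right hij.le, min_eq_left hkl.le, max_eq_right hkl.le,
      genL i j k l hij hjm hkl hlm, elex2]
    unfold rule
    split_ifs <;>
      first
        | exact iff_of_true ‹_› (by omega)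
        | exact iff_of_false ‹_› (by omega)
        | exact iff_of_false (not_not_intro ‹_›) (by omega)
        | exact iff_of_false not_false (by omega)
  -- FTTF : impossible
  · exact absurd (hex1 hP hR) hU
  -- FTFT : reversed inverse max
  · refine ⟨2, fun x => m - 1 - x, fun i h => by show m - 1 - i < m; omega, fun i j hi hj hne => by show m - 1 - i ≠ m - 1 - j; omega, ?_⟩
    intro i j k l hij hjm hkl hlm
    show lab (min (m-1-i) (m-1-j)) (max (m-1-i) (m-1-j)) <
      lab (min (m-1-k) (m-1-l)) (max (m-1-k) (m-1-l)) ↔ _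
    have e1 : min (m-1-i) (m-1-j) = m-1-j := by omega
    have e2 : max (m-1-i) (m-1-j) = m-1-i := by omega
    have e3 : min (m-1-k) (m-1-l) = m-1-l := by omega
    have e4 : max (m-1-k) (m-1-l) = m-1-k := by omega
    rw [e1, e2, e3, e4,
      genL (m-1-j) (m-1-i) (m-1-l) (m-1-k) (by omega) (by omega) (by omega) (by omega), elex2]
    unfold rule
    split_ifs <;>
      first
        | exact iff_of_true ‹_› (by omega)
        | exact iff_of_false ‹_› (by omega)
        | exact iff_of_false (not_not_intro ‹_›) (by omega)
        | exact iff_of_false not_false (by omega)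
  -- FTFF : impossible
  · exact absurd (hex1 hP hR) hU
  -- FFTT : impossible
  · rcases hqpr hQ with h | h
    · exact absurd h hP
    · exact absurd h hR
  -- FFTF : impossible
  · rcases hqpr hQ with h | h
    · exact absurd h hP
    · exact absurd h hR
  -- FFFT : reversed max
  · refine ⟨0, fun x => m - 1 - x, fun i h => by show m - 1 - i < m; omega, fun i j hi hj hne => by show m - 1 - i ≠ m - 1 - j; omega, ?_⟩
    intro i j k l hij hjm hkl hlm
    show lab (min (m-1-i) (m-1-j)) (max (m-1-i) (m-1-j)) <
      lab (min (m-1-k) (m-1-l)) (max (m-1-k) (m-1-l)) ↔ _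
    have e1 : min (m-1-i) (m-1-j) = m-1-j := by omega
    have e2 : max (m-1-i) (m-1-j) = m-1-i := by omega
    have e3 : min (m-1-k) (m-1-l) = m-1-l := by omega
    have e4 : max (m-1-k) (m-1-l) = m-1-k := by omega
    rw [e1, e2, e3, e4,
      genL (m-1-j) (m-1-i) (m-1-l) (m-1-k) (by omega) (by omega) (by omega) (by omega), elex0]
    unfold rule
    split_ifs <;>
      first
        | exact iff_of_true ‹_› (by omega)
        | exact iff_of_false ‹_› (by omega)
        | exact iff_of_false (not_not_intro ‹_›) (by omega)
        | exact iff_of_false not_false (by omega)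
  -- FFFF : reversed min
  · refine ⟨1, fun x => m - 1 - x, fun i h => by show m - 1 - i < m; omega, fun i j hi hj hne => by show m - 1 - i ≠ m - 1 - j; omega, ?_⟩
    intro i j k l hij hjm hkl hlm
    show lab (min (m-1-i) (m-1-j)) (max (m-1-i) (m-1-j)) <
      lab (min (m-1-k) (m-1-l)) (max (m-1-k) (m-1-l)) ↔ _
    have e1 : min (m-1-i) (m-1-j) = m-1-j := by omega
    have e2 : max (m-1-i) (m-1-j) = m-1-i := by omega
    have e3 : min (m-1-k) (m-1-l) = m-1-l := by omega
    have e4 : max (m-1-k) (m-1-l) = m-1-k := by omega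
    rw [e1, e2, e3, e4,
      genL (m-1-j) (m-1-i) (m-1-l) (m-1-k) (by omega) (by omega) (by omega) (by omega), elex1]
    unfold rule
    split_ifs <;>
      first
        | exact iff_of_true ‹_› (by omega)
        | exact iff_of_false ‹_› (by omega)
        | exact iff_of_false (not_not_intro ‹_›) (by omega)
        | exact iff_of_false not_false (by omega)

end Classify2
lemma elex_transport (t : Fin 4) (x y : Fin 4 → ℕ)
    (hlt : ∀ p q, x p < x q ↔ y p < y q) :
    (elex t (min (x 0) (x 1)) (max (x 0) (x 1)) (min (x 2) (x 3)) (max (x 2) (x 3)) ↔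
     elex t (min (y 0) (y 1)) (max (y 0) (y 1)) (min (y 2) (y 3)) (max (y 2) (y 3))) := by
  have h01 := hlt 0 1; have h10 := hlt 1 0; have h02 := hlt 0 2; have h20 := hlt 2 0
  have h03 := hlt 0 3; have h30 := hlt 3 0; have h12 := hlt 1 2; have h21 := hlt 2 1
  have h13 := hlt 1 3; have h31 := hlt 3 1; have h23 := hlt 2 3; have h32 := hlt 3 2
  rcases fin4_cases t with rfl | rfl | rfl | rfl <;>
    simp only [elex0, elex1, elex2, elex3] <;> omega

lemma canonLabel_symm (n : ℕ) (t : Fin 4) (a b : Fin n) :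
    canonLabel n t a b = canonLabel n t b a := by
  simp [canonLabel, min_comm, max_comm]

set_option maxHeartbeats 1600000 in
lemma turanable_forward {W : Type} [Fintype W] (F : EdgeOrderedGraph W) (h : Turanable F) :
    ∀ (t : Fin 4) (G : EdgeOrderedGraph (Fin (Fintype.card W))),
      IsCanonicalOrdering G t → G.ContainsCopy F := by
  classical
  obtain ⟨t₀, ht⟩ := h
  intro t G hcan
  set f := Fintype.card W with hf
  -- the canonical edge-ordering of type `t` on `Fin t₀`
  set H : EdgeOrderedGraph (Fin t₀) :=
    { graph := ⊤
      label := Sym2.lift ⟨fun a b => canonLabel t₀ t a b, fun a b => canonLabel_symm t₀ t a b⟩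
      inj := by
        intro e₁ h₁ e₂ h₂ heq
        induction e₁ using Sym2.ind with
        | _ a b =>
        induction e₂ using Sym2.ind with
        | _ c d =>
        simp only [SimpleGraph.mem_edgeSet, SimpleGraph.top_adj] at h₁ h₂
        simp only [Sym2.lift_mk] at heq
        have hab : a.val ≠ b.val := fun hh => h₁ (Fin.val_injective hh)
        have hcd : c.val ≠ d.val := fun hh => h₂ (Fin.val_injective hh)
        rcases elex_trichotomy t (i := min a.val b.val) (j := max a.val b.val)
            (k := min c.val d.val) (l := max c.val d.val) (by omega) (by omega) with
          hlt | hlt | hlt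
        · exact absurd heq (ne_of_lt ((canonLabel_lt_iff t a b c d h₁ h₂).mpr hlt))
        · exact absurd heq.symm (ne_of_lt ((canonLabel_lt_iff t c d a b h₂ h₁).mpr hlt))
        · have : (a.val = c.val ∧ b.val = d.val) ∨ (a.val = d.val ∧ b.val = c.val) := by omega
          rw [Sym2.eq_iff]
          rcases this with ⟨x1, y1⟩ | ⟨x1, y1⟩
          · exact Or.inl ⟨Fin.val_injective x1, Fin.val_injective y1⟩
          · exact Or.inr ⟨Fin.val_injective x1, Fin.val_injective y1⟩ } with hH
  obtain ⟨φ, hinj, hadj, hord⟩ := ht H rfl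
  -- re-embed the image of `φ` into `Fin f` monotonically
  set imgs : Finset (Fin t₀) := Finset.univ.image φ with himgs
  have hcard : imgs.card = f := by
    rw [himgs, Finset.card_image_of_injective _ hinj, Finset.card_univ, hf]
  set iso := imgs.orderIsoOfFin hcard with hiso
  have hmemimg : ∀ w : W, φ w ∈ imgs := fun w => Finset.mem_image_of_mem φ (Finset.mem_univ w)
  set ψ : W → Fin f := fun w => iso.symm ⟨φ w, hmemimg w⟩ with hψ
  have hisoψ : ∀ w, (iso (ψ w) : Fin t₀) = φ w := by
    intro w; rw [hψ]; simp
  have hψlt : ∀ w w', (φ w).val < (φ w').val ↔ (ψ w).val < (ψ w').val := by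
    intro w w'
    rw [← Fin.lt_def, ← Fin.lt_def, ← hisoψ w, ← hisoψ w']
    constructor
    · intro hh
      have : iso (ψ w) < iso (ψ w') := by exact_mod_cast hh
      exact iso.lt_iff_lt.mp this
    · intro hh
      have : iso (ψ w) < iso (ψ w') := iso.lt_iff_lt.mpr hh
      exact_mod_cast this
  have hψinj : Function.Injective ψ := by
    intro w w' hh
    apply hinj
    rw [← hisoψ w, ← hisoψ w', hh]
  refine ⟨ψ, hψinj, ?_, ?_⟩
  · intro a b hab
    rw [hcan.1, SimpleGraph.top_adj]
    exact fun hh => hab.ne (hψinj hh)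
  · intro a b c d hab hcd hlt
    have h1 := hord a b c d hab hcd hlt
    simp only [hH, Sym2.lift_mk] at h1
    have hφab : φ a ≠ φ b := fun hh => hab.ne (hinj hh)
    have hφcd : φ c ≠ φ d := fun hh => hcd.ne (hinj hh)
    have h2 := (canonLabel_lt_iff t (φ a) (φ b) (φ c) (φ d) hφab hφcd).mp h1
    have hψab : ψ a ≠ ψ b := fun hh => hab.ne (hψinj hh)
    have hψcd : ψ c ≠ ψ d := fun hh => hcd.ne (hψinj hh)
    have h3 := (elex_transport t ![(φ a).val, (φ b).val, (φ c).val, (φ d).val]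
      ![(ψ a).val, (ψ b).val, (ψ c).val, (ψ d).val] ?_).mp h2
    · exact (hcan.2 (ψ a) (ψ b) (ψ c) (ψ d) hψab hψcd).mpr
        ((canonLabel_lt_iff t (ψ a) (ψ b) (ψ c) (ψ d) hψab hψcd).mpr h3)
    · intro p q
      fin_cases p <;> fin_cases q <;> exact hψlt _ _
lemma mono4 {a b c d : ℕ} (hab : a < b) (hbc : b < c) (hcd : c < d) :
    StrictMono (![a,b,c,d] : Fin 4 → ℕ) := by
  intro p q hpq
  fin_cases p <;> fin_cases q <;> simp_all <;> omega

/-- The Ramsey coloring of 4-subsets of `ℕ` induced by an edge labeling. -/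
noncomputable def ecolor (lab : ℕ → ℕ → ℝ) (B : Finset ℕ) :
    Fin 4 → Fin 4 → Fin 4 → Fin 4 → Bool :=
  if hB : B.card = 4 then
    fun q1 q2 q3 q4 => decide (lab (B.orderEmbOfFin hB q1) (B.orderEmbOfFin hB q2) <
      lab (B.orderEmbOfFin hB q3) (B.orderEmbOfFin hB q4))
  else fun _ _ _ _ => false

lemma hom4_of_mono (lab : ℕ → ℕ → ℝ) (S : Finset ℕ) (col : Fin 4 → Fin 4 → Fin 4 → Fin 4 → Bool)
    (hcol : ∀ B ⊆ S, B.card = 4 → ecolor lab B = col)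
    (xN : ℕ → ℕ) (m : ℕ) (hlt : ∀ i j, i < j → j < m → xN i < xN j)
    (hS : ∀ i, i < m → xN i ∈ S) :
    Hom4 (fun i j => lab (xN i) (xN j)) m := by
  classical
  have key : ∀ a b c d : ℕ, a < b → b < c → c < d → d < m → ∀ q1 q2 q3 q4 : Fin 4,
      (col q1 q2 q3 q4 = true ↔
        lab (xN (![a,b,c,d] q1)) (xN (![a,b,c,d] q2)) <
          lab (xN (![a,b,c,d] q3)) (xN (![a,b,c,d] q4))) := by
    intro a b c d hab hbc hcd hdm q1 q2 q3 q4
    have h1 : xN a < xN b := hlt _ _ hab (by omega)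
    have h2 : xN b < xN c := hlt _ _ hbc (by omega)
    have h3 : xN c < xN d := hlt _ _ hcd hdm
    set B : Finset ℕ := {xN a, xN b, xN c, xN d} with hB
    have hBcard : B.card = 4 := by
      rw [hB, Finset.card_insert_of_notMem (by simp; omega),
          Finset.card_insert_of_notMem (by simp; omega),
          Finset.card_insert_of_notMem (by simp; omega), Finset.card_singleton]
    have hBsub : B ⊆ S := by
      rw [hB]; intro y hy
      simp only [Finset.mem_insert, Finset.mem_singleton] at hy
      rcases hy with rfl | rfl | rfl | rfl
      exacts [hS a (by omega), hS b (by omega), hS c (by omega), hS d hdm]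
    have hmem : ∀ p : Fin 4, (![xN a, xN b, xN c, xN d] : Fin 4 → ℕ) p ∈ B := by
      intro p; fin_cases p <;> simp [hB]
    have hemb : (![xN a, xN b, xN c, xN d] : Fin 4 → ℕ) = ⇑(B.orderEmbOfFin hBcard) :=
      Finset.orderEmbOfFin_unique hBcard hmem (mono4 h1 h2 h3)
    have hcomm : ∀ q : Fin 4, xN (![a,b,c,d] q) = (![xN a, xN b, xN c, xN d] : Fin 4 → ℕ) q := by
      intro q; fin_cases q <;> rfl
    have e1 : col q1 q2 q3 q4 = ecolor lab B q1 q2 q3 q4 := by rw [hcol B hBsub hBcard]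
    have e2 : ecolor lab B q1 q2 q3 q4 =
        decide (lab (B.orderEmbOfFin hBcard q1) (B.orderEmbOfFin hBcard q2) <
          lab (B.orderEmbOfFin hBcard q3) (B.orderEmbOfFin hBcard q4)) := by
      rw [ecolor, dif_pos hBcard]
    rw [e1, e2, ← hemb, hcomm q1, hcomm q2, hcomm q3, hcomm q4]
    exact decide_eq_true_iff
  intro a b c d a' b' c' d' hab hbc hcd hdm hab' hbc' hcd' hdm' q1 q2 q3 q4
  exact ((key a b c d hab hbc hcd hdm q1 q2 q3 q4).symm.trans
    (key a' b' c' d' hab' hbc' hcd' hdm' q1 q2 q3 q4))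

set_option maxHeartbeats 1600000 in
lemma turanable_backward {W : Type} [Fintype W] (F : EdgeOrderedGraph W)
    (h : ∀ (t : Fin 4) (G : EdgeOrderedGraph (Fin (Fintype.card W))),
      IsCanonicalOrdering G t → G.ContainsCopy F) : Turanable F := by
  classical
  set f := Fintype.card W with hf
  set m := f + 5 with hm
  obtain ⟨N, hN⟩ := ramsey_exists (α := ℕ) (κ := Fin 4 → Fin 4 → Fin 4 → Fin 4 → Bool) 4 m
  refine ⟨N, fun G hG => ?_⟩
  set lab : ℕ → ℕ → ℝ := fun i j =>
    if hij : i < N ∧ j < N then G.label s(⟨i, hij.1⟩, ⟨j, hij.2⟩) else 0 with hlab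
  obtain ⟨S, hSsub, hScard, col, hcol⟩ := hN (ecolor lab) (Finset.range N) (by simp)
  obtain ⟨S', hS'sub, hS'card⟩ := Finset.exists_subset_card_eq hScard
  set x := S'.orderEmbOfFin hS'card with hx
  have hxmem : ∀ p : Fin m, x p ∈ S := fun p => hS'sub (Finset.orderEmbOfFin_mem S' hS'card p)
  have hxN : ∀ p : Fin m, x p < N := fun p => Finset.mem_range.mp (hSsub (hxmem p))
  have hm0 : 0 < m := by omega
  set xN : ℕ → ℕ := fun i => x ⟨min i (m - 1), by omega⟩ with hxNdef
  have hxNeq : ∀ i, ∀ hi : i < m, xN i = x ⟨i, hi⟩ := by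
    intro i hi
    rw [hxNdef]
    exact congrArg x (Fin.ext (by simp; omega))
  have hxNlt : ∀ i j, i < j → j < m → xN i < xN j := by
    intro i j hij hjm
    rw [hxNeq i (by omega), hxNeq j hjm]
    exact x.strictMono (Fin.mk_lt_mk.mpr hij)
  have hxNb : ∀ i, i < m → xN i < N := fun i hi => by
    rw [hxNeq i hi]; exact hxN _
  have hxNS : ∀ i, i < m → xN i ∈ S := fun i hi => by
    rw [hxNeq i hi]; exact hxmem _
  have hxNinj : ∀ p q, p < m → q < m → xN p = xN q → p = q := by
    intro p q hp hq hpq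
    rcases lt_trichotomy p q with hh | hh | hh
    · exact absurd hpq (ne_of_lt (hxNlt p q hh hq))
    · exact hh
    · exact absurd hpq.symm (ne_of_lt (hxNlt q p hh hp))
  -- classification of the induced ordering on the homogeneous set
  have hinj' : ∀ i j k l, i < j → j < m → k < l → l < m →
      (fun i j => lab (xN i) (xN j)) i j = (fun i j => lab (xN i) (xN j)) k l →
      i = k ∧ j = l := by
    intro i j k l hij hjm hkl hlm heq
    simp only [hlab] at heq
    rw [dif_pos ⟨hxNb i (by omega), hxNb j hjm⟩, dif_pos ⟨hxNb k (by omega), hxNb l hlm⟩] at heq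
    have hne1 : (⟨xN i, hxNb i (by omega)⟩ : Fin N) ≠ ⟨xN j, hxNb j hjm⟩ := by
      simp only [ne_eq, Fin.mk.injEq]
      exact ne_of_lt (hxNlt i j hij hjm)
    have hne2 : (⟨xN k, hxNb k (by omega)⟩ : Fin N) ≠ ⟨xN l, hxNb l hlm⟩ := by
      simp only [ne_eq, Fin.mk.injEq]
      exact ne_of_lt (hxNlt k l hkl hlm)
    have := G.inj _ (by rw [hG]; exact hne1) _ (by rw [hG]; exact hne2) heq
    rw [Sym2.eq_iff] at this
    rcases this with ⟨h1, h2⟩ | ⟨h1, h2⟩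
    · have e1 : xN i = xN k := congrArg Fin.val h1
      have e2 : xN j = xN l := congrArg Fin.val h2
      exact ⟨hxNinj i k (by omega) (by omega) e1, hxNinj j l hjm hlm e2⟩
    · have e1 : xN i = xN l := congrArg Fin.val h1
      have e2 : xN j = xN k := congrArg Fin.val h2
      have := hxNlt i j hij hjm
      have := hxNlt k l hkl hlm
      omega
  have hom4' : Hom4 (fun i j => lab (xN i) (xN j)) m :=
    hom4_of_mono lab S col hcol xN m hxNlt hxNS
  obtain ⟨t', e, hb, hinjE, hiff⟩ := classify (by omega) hinj' hom4'
  -- build the canonically ordered complete graph on `Fin f`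
  have hbf : ∀ i : Fin f, e i.val < m := fun i => hb i.val (by omega)
  set ψ : Fin f → Fin N := fun i => ⟨xN (e i.val), hxNb _ (hbf i)⟩ with hψ
  have hψinj : Function.Injective ψ := by
    intro u v huv
    have : xN (e u.val) = xN (e v.val) := congrArg Fin.val huv
    have := hxNinj _ _ (hbf u) (hbf v) this
    by_contra hne
    exact hinjE u.val v.val (by omega) (by omega) (fun hh => hne (Fin.ext hh)) this
  have hGlab : ∀ u v : Fin f, G.label s(ψ u, ψ v) =
      (fun i j => lab (xN i) (xN j)) (min (e u.val) (e v.val)) (max (e u.val) (e v.val)) := by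
    intro u v
    rcases le_total (e u.val) (e v.val) with hh | hh
    · rw [min_eq_left hh, max_eq_right hh]
      simp only [hlab]
      rw [dif_pos ⟨hxNb _ (hbf u), hxNb _ (hbf v)⟩]
    · rw [min_eq_right hh, max_eq_left hh]
      simp only [hlab]
      rw [dif_pos ⟨hxNb _ (hbf v), hxNb _ (hbf u)⟩]
      rw [Sym2.eq_swap]
  have pairEq : ∀ u v : Fin f,
      min (e (min u.val v.val)) (e (max u.val v.val)) = min (e u.val) (e v.val) ∧
      max (e (min u.val v.val)) (e (max u.val v.val)) = max (e u.val) (e v.val) := by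
    intro u v
    rcases le_total u.val v.val with hh | hh
    · rw [min_eq_left hh, max_eq_right hh]; exact ⟨rfl, rfl⟩
    · rw [min_eq_right hh, max_eq_left hh, min_comm, max_comm]; exact ⟨rfl, rfl⟩
  set G' : EdgeOrderedGraph (Fin f) :=
    { graph := ⊤
      label := fun ed => G.label (ed.map ψ)
      inj := by
        intro e₁ h₁ e₂ h₂ heq
        induction e₁ using Sym2.ind with
        | _ a b =>
        induction e₂ using Sym2.ind with
        | _ c d =>
        simp only [SimpleGraph.mem_edgeSet, SimpleGraph.top_adj] at h₁ h₂
        simp only [Sym2.map_pair_eq] at heq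
        have := G.inj _ (by rw [hG]; exact fun hh => h₁ (hψinj hh)) _
          (by rw [hG]; exact fun hh => h₂ (hψinj hh)) heq
        rw [Sym2.eq_iff] at this
        rw [Sym2.eq_iff]
        rcases this with ⟨h1, h2⟩ | ⟨h1, h2⟩
        · exact Or.inl ⟨hψinj h1, hψinj h2⟩
        · exact Or.inr ⟨hψinj h1, hψinj h2⟩ } with hG'
  have hcanon : IsCanonicalOrdering G' t' := by
    refine ⟨rfl, ?_⟩
    intro a b c d hab hcd
    have hab' : a.val ≠ b.val := fun hh => hab (Fin.ext hh)
    have hcd' : c.val ≠ d.val := fun hh => hcd (Fin.ext hh)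
    have h1 := hiff (min a.val b.val) (max a.val b.val) (min c.val d.val) (max c.val d.val)
      (by omega) (by have := a.isLt; have := b.isLt; omega)
      (by omega) (by have := c.isLt; have := d.isLt; omega)
    rw [(pairEq a b).1, (pairEq a b).2, (pairEq c d).1, (pairEq c d).2] at h1
    have e1 : G'.label s(a, b) = G.label s(ψ a, ψ b) := by
      simp only [hG', Sym2.map_pair_eq]
    have e2 : G'.label s(c, d) = G.label s(ψ c, ψ d) := by
      simp only [hG', Sym2.map_pair_eq]
    rw [e1, e2, hGlab a b, hGlab c d, h1]
    exact (canonLabel_lt_iff t' a b c d hab hcd).symm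
  obtain ⟨φ, hφinj, hφadj, hφord⟩ := h t' G' hcanon
  refine ⟨ψ ∘ φ, hψinj.comp hφinj, ?_, ?_⟩
  · intro a b hab
    rw [hG, SimpleGraph.top_adj]
    exact fun hh => hab.ne (hφinj (hψinj hh))
  · intro a b c d hab hcd hlt
    have := hφord a b c d hab hcd hlt
    simp only [hG', Sym2.map_pair_eq] at this
    exact this
/-- **Turánable characterization.** An edge-ordered graph `F` on `f` vertices is Turánable
if and only if each of the four canonical edge-orderings of `K_f` contains a copy of `F`. -/
theorem turanable_characterization {W : Type} [Fintype W] (F : EdgeOrderedGraph W) :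
    Turanable F ↔
      ∀ (t : Fin 4) (G : EdgeOrderedGraph (Fin (Fintype.card W))),
        IsCanonicalOrdering G t → G.ContainsCopy F := by
  exact ⟨turanable_forward F, turanable_backward F⟩
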